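/- Let G be a finite simple undirected connected graph with at least two vertices and positive vertex weights, with bottleneck decomposition {(B_1,C_1),…,(B_k,C_k)} and α_i = w(C_i)/w(B_i), and let X be a BD-mechanism allocation. Then X is lexicographically optimal: for every allocation X' on G, the nondecreasing rearrangement of the exchange-ratio vector (β_u(X))_{u∈V} is greater than or equal to the nondecreasing rearrangement of (β_u(X'))_{u∈V} in the lexicographic order. -/

import Mathlib

open Finset

/-- The total weight of a finite set of vertices. -/
def wsum {V : Type*} (w : V → ℝ) (S : Finset V) : ℝ := ∑ v ∈ S, w v

/-- The neighborhood of `S` inside the induced subgraph on `A`: all vertices of `A` adjacent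
to at least one vertex of `S`. -/
def nbhdIn {V : Type*} [DecidableEq V] (G : SimpleGraph V) [DecidableRel G.Adj]
    (A S : Finset V) : Finset V :=
  A.filter fun v => ∃ u ∈ S, G.Adj u v

/-- The α-ratio of `S` computed inside the induced subgraph on `A`. -/
noncomputable def alphaIn {V : Type*} [DecidableEq V] (G : SimpleGraph V)
    [DecidableRel G.Adj] (w : V → ℝ) (A S : Finset V) : ℝ :=
  wsum w (nbhdIn G A S) / wsum w S

/-- `B` is the maximal bottleneck of the induced subgraph `G[A]`: it is a nonempty subset of
`A` of minimal α-ratio (within `G[A]`) and every strictly larger subset of `A` has strictly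
larger α-ratio. -/
def IsMaxBottleneckIn {V : Type*} [DecidableEq V] (G : SimpleGraph V) [DecidableRel G.Adj]
    (w : V → ℝ) (A B : Finset V) : Prop :=
  B.Nonempty ∧ B ⊆ A ∧
    (∀ S : Finset V, S.Nonempty → S ⊆ A → alphaIn G w A B ≤ alphaIn G w A S) ∧
    ∀ B' : Finset V, B ⊂ B' → B' ⊆ A → alphaIn G w A B < alphaIn G w A B'


/-- `x` is an allocation on `G`: nonnegative, supported on edges, and each vertex
distributes its whole (unit fraction of) resource: `Σ_{v∈Γ(u)} x_{uv} = 1`. -/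
def IsAllocation {V : Type*} [Fintype V] [DecidableEq V] (G : SimpleGraph V)
    [DecidableRel G.Adj] (x : V → V → ℝ) : Prop :=
  (∀ u v, 0 ≤ x u v) ∧ (∀ u v, ¬ G.Adj u v → x u v = 0) ∧
    ∀ u : V, ∑ v ∈ G.neighborFinset u, x u v = 1

/-- The utility `U_u(X) = Σ_{v∈Γ(u)} x_{vu}·w(v)` of agent `u` under allocation `x`. -/
def util {V : Type*} [Fintype V] [DecidableEq V] (G : SimpleGraph V) [DecidableRel G.Adj]
    (w : V → ℝ) (x : V → V → ℝ) (u : V) : ℝ :=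
  ∑ v ∈ G.neighborFinset u, x v u * w v

/-- `x` is a BD-mechanism allocation for the bottleneck decomposition `(B i, C i)` with
α-ratios `alpha i`: it is an allocation, exchange happens only along edges between `B i`
and `C i` of the same pair, and `x_{vu}·w(v) = α_i·x_{uv}·w(u)` for every edge `(u,v)`
with `u ∈ B i`, `v ∈ C i`. -/
def IsBDAllocation {V : Type*} [Fintype V] [DecidableEq V] (G : SimpleGraph V)
    [DecidableRel G.Adj] (w : V → ℝ) (k : ℕ) (B C : Fin k → Finset V)
    (x : V → V → ℝ) : Prop :=
  IsAllocation G x ∧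
    (∀ u v : V, x u v ≠ 0 → ∃ i : Fin k, (u ∈ B i ∧ v ∈ C i) ∨ (u ∈ C i ∧ v ∈ B i)) ∧
    ∀ i : Fin k, ∀ u ∈ B i, ∀ v ∈ C i, G.Adj u v →
      x v u * w v = (wsum w (C i) / wsum w (B i)) * (x u v * w u)

/-- The exchange ratio `β_u(X) = U_u(X)/w(u)` of agent `u` under allocation `x`. -/
noncomputable def exRatio {V : Type*} [Fintype V] [DecidableEq V] (G : SimpleGraph V)
    [DecidableRel G.Adj] (w : V → ℝ) (x : V → V → ℝ) (u : V) : ℝ :=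
  util G w x u / w u

/-- `lexLE f g`: the vector `f` is less than or equal to `g` in the lexicographic order. -/
def lexLE {n : ℕ} (f g : Fin n → ℝ) : Prop :=
  f = g ∨ ∃ i : Fin n, (∀ j : Fin n, j < i → f j = g j) ∧ f i < g i

/-- `x` is lexicographically optimal: for every allocation `y`, the nondecreasing
rearrangement of the exchange-ratio vector of `y` is lexicographically at most the
nondecreasing rearrangement of that of `x` (rearrangements being given by monotone
enumerations of the vertices). -/
def LexOptimal {V : Type*} [Fintype V] [DecidableEq V] (G : SimpleGraph V)
    [DecidableRel G.Adj] (w : V → ℝ) (x : V → V → ℝ) : Prop :=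
  ∀ y : V → V → ℝ, IsAllocation G y →
    ∀ e e' : Fin (Fintype.card V) ≃ V,
      Monotone (fun i => exRatio G w x (e i)) →
      Monotone (fun i => exRatio G w y (e' i)) →
      lexLE (fun i => exRatio G w y (e' i)) (fun i => exRatio G w x (e i))

section BDAux

set_option linter.unusedSectionVars false

open Finset

variable {V : Type*} [Fintype V] [DecidableEq V]

lemma wsum_nonneg {w : V → ℝ} (hw : ∀ v, 0 < w v) (S : Finset V) : 0 ≤ wsum w S :=
  Finset.sum_nonneg fun v _ => (hw v).le

lemma wsum_pos {w : V → ℝ} (hw : ∀ v, 0 < w v) {S : Finset V} (hS : S.Nonempty) :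
    0 < wsum w S := Finset.sum_pos (fun v _ => hw v) hS

lemma wsum_mono {w : V → ℝ} (hw : ∀ v, 0 < w v) {S T : Finset V} (h : S ⊆ T) :
    wsum w S ≤ wsum w T :=
  Finset.sum_le_sum_of_subset_of_nonneg h fun v _ _ => (hw v).le

lemma wsum_union_le {w : V → ℝ} (hw : ∀ v, 0 < w v) (S T : Finset V) :
    wsum w (S ∪ T) ≤ wsum w S + wsum w T := by
  have h0 : 0 ≤ wsum w (S ∩ T) := wsum_nonneg hw _
  have h : ∑ v ∈ S ∪ T, w v + ∑ v ∈ S ∩ T, w v = ∑ v ∈ S, w v + ∑ v ∈ T, w v :=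
    Finset.sum_union_inter
  unfold wsum at *
  linarith

lemma wsum_union {w : V → ℝ} {S T : Finset V} (h : Disjoint S T) :
    wsum w (S ∪ T) = wsum w S + wsum w T := Finset.sum_union h

lemma wsum_sdiff' {w : V → ℝ} {S T : Finset V} (h : S ⊆ T) :
    wsum w (T \ S) = wsum w T - wsum w S := by
  have := Finset.sum_sdiff (f := w) h
  unfold wsum at *
  linarith

/-- total payment of vertex `v` into the set `S` under allocation `y`. -/
def paysum (y : V → V → ℝ) (v : V) (S : Finset V) : ℝ := ∑ u ∈ S, y v u

variable {G : SimpleGraph V} [DecidableRel G.Adj]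

lemma paysum_nonneg {y : V → V → ℝ} (hy : IsAllocation G y) (v : V) (S : Finset V) :
    0 ≤ paysum y v S := Finset.sum_nonneg fun u _ => hy.1 v u

lemma paysum_le_one {y : V → V → ℝ} (hy : IsAllocation G y) (v : V) (S : Finset V) :
    paysum y v S ≤ 1 := by
  have h2 : ∑ u ∈ G.neighborFinset v, y v u = ∑ u ∈ univ, y v u :=
    Finset.sum_subset (subset_univ _) fun u _ hu =>
      hy.2.1 v u (fun hadj => hu ((G.mem_neighborFinset v u).2 hadj))
  have h1 : paysum y v S ≤ ∑ u ∈ univ, y v u :=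
    Finset.sum_le_sum_of_subset_of_nonneg (subset_univ S) fun u _ _ => hy.1 v u
  rw [← h2, hy.2.2 v] at h1
  exact h1

lemma paysum_zero_of_one {y : V → V → ℝ} (hy : IsAllocation G y) {v : V} {S T : Finset V}
    (h1 : paysum y v T = 1) (hd : Disjoint S T) : paysum y v S = 0 := by
  have h := paysum_le_one hy v (S ∪ T)
  rw [paysum, Finset.sum_union hd] at h
  have h0 := paysum_nonneg hy v S
  have : paysum y v S ≤ 0 := by
    have : paysum y v S + paysum y v T ≤ 1 := h
    rw [h1] at this; linarith
  linarith

lemma paysum_zero_of_no_adj {y : V → V → ℝ} (hy : IsAllocation G y) {v : V} {S : Finset V}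
    (h : ∀ u ∈ S, ¬ G.Adj v u) : paysum y v S = 0 :=
  Finset.sum_eq_zero fun u hu => hy.2.1 v u (h u hu)

lemma util_sum (w : V → ℝ) {y : V → V → ℝ} (hy : IsAllocation G y) (S : Finset V) :
    ∑ u ∈ S, util G w y u = ∑ v ∈ univ, w v * paysum y v S := by
  have hext : ∀ u : V, util G w y u = ∑ v ∈ univ, y v u * w v := fun u =>
    Finset.sum_subset (subset_univ _) (fun v _ hv => by
      rw [hy.2.1 v u (fun hadj => hv ((G.mem_neighborFinset u v).2 hadj.symm)), zero_mul])
  calc ∑ u ∈ S, util G w y u = ∑ u ∈ S, ∑ v ∈ univ, y v u * w v :=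
        Finset.sum_congr rfl fun u _ => hext u
    _ = ∑ v ∈ univ, ∑ u ∈ S, y v u * w v := Finset.sum_comm
    _ = ∑ v ∈ univ, w v * paysum y v S := by
        refine Finset.sum_congr rfl fun v _ => ?_
        rw [paysum, Finset.mul_sum]
        exact Finset.sum_congr rfl fun u _ => mul_comm _ _

lemma util_eq_exRatio_mul (w : V → ℝ) (hw : ∀ v, 0 < w v) (y : V → V → ℝ) (u : V) :
    util G w y u = exRatio G w y u * w u := by
  rw [exRatio, div_mul_cancel₀ _ (ne_of_gt (hw u))]

end BDAux
section BDStruct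

set_option linter.unusedSectionVars false

open Finset

variable {V : Type*} [Fintype V] [DecidableEq V] {G : SimpleGraph V} [DecidableRel G.Adj]
variable {w : V → ℝ} {k : ℕ} {B C : Fin k → Finset V} {Vs : Fin (k+1) → Finset V}

lemma chainVs (hVsucc : ∀ i : Fin k, Vs i.succ = Vs i.castSucc \ (B i ∪ C i)) :
    ∀ d : ℕ, ∀ a b : Fin (k+1), (b : ℕ) = (a : ℕ) + d → Vs b ⊆ Vs a := by
  intro d
  induction d with
  | zero =>
    intro a b h
    have : a = b := Fin.ext (by omega)
    exact this ▸ subset_rfl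
  | succ d ih =>
    intro a b h
    have hm : (a : ℕ) + d < k := by have := b.isLt; omega
    have hb : b = (⟨(a:ℕ)+d, hm⟩ : Fin k).succ := Fin.ext (by simp [Fin.val_succ]; omega)
    rw [hb, hVsucc]
    exact Finset.sdiff_subset.trans (ih a _ (by simp))

lemma chainVs' (hVsucc : ∀ i : Fin k, Vs i.succ = Vs i.castSucc \ (B i ∪ C i))
    {a b : Fin (k+1)} (hab : a ≤ b) : Vs b ⊆ Vs a :=
  chainVs hVsucc ((b : ℕ) - (a : ℕ)) a b (by have := Fin.le_def.mp hab; omega)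

lemma blockSub (hB : ∀ i : Fin k, IsMaxBottleneckIn G w (Vs i.castSucc) (B i))
    (hC : ∀ i : Fin k, C i = nbhdIn G (Vs i.castSucc) (B i)) (i : Fin k) :
    B i ∪ C i ⊆ Vs i.castSucc := by
  apply union_subset ((hB i).2.1)
  rw [hC i]; exact filter_subset _ _

lemma blockNotSucc (hVsucc : ∀ i : Fin k, Vs i.succ = Vs i.castSucc \ (B i ∪ C i))
    (i : Fin k) {v : V} (hv : v ∈ B i ∪ C i) : v ∉ Vs i.succ := by
  rw [hVsucc i]; intro h; exact (mem_sdiff.mp h).2 hv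

lemma memC (hC : ∀ i : Fin k, C i = nbhdIn G (Vs i.castSucc) (B i)) {i : Fin k} {v : V} :
    v ∈ C i ↔ v ∈ Vs i.castSucc ∧ ∃ u ∈ B i, G.Adj u v := by
  rw [hC i, nbhdIn, mem_filter]

lemma blockDisj (hVsucc : ∀ i : Fin k, Vs i.succ = Vs i.castSucc \ (B i ∪ C i))
    (hB : ∀ i : Fin k, IsMaxBottleneckIn G w (Vs i.castSucc) (B i))
    (hC : ∀ i : Fin k, C i = nbhdIn G (Vs i.castSucc) (B i))
    {i j : Fin k} (hij : i < j) {v : V}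
    (hvi : v ∈ B i ∪ C i) (hvj : v ∈ B j ∪ C j) : False := by
  have h1 : v ∈ Vs j.castSucc := blockSub hB hC j hvj
  have h2 : i.succ ≤ j.castSucc := by
    rw [Fin.le_def]; simp only [Fin.val_succ, Fin.coe_castSucc]
    exact Fin.lt_def.mp hij
  exact blockNotSucc hVsucc i hvi (chainVs' hVsucc h2 h1)

lemma blockUniq (hVsucc : ∀ i : Fin k, Vs i.succ = Vs i.castSucc \ (B i ∪ C i))
    (hB : ∀ i : Fin k, IsMaxBottleneckIn G w (Vs i.castSucc) (B i))
    (hC : ∀ i : Fin k, C i = nbhdIn G (Vs i.castSucc) (B i))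
    {i j : Fin k} {v : V} (hvi : v ∈ B i ∪ C i) (hvj : v ∈ B j ∪ C j) : i = j := by
  rcases lt_trichotomy i j with h | h | h
  · exact absurd (blockDisj hVsucc hB hC h hvi hvj) (by simp)
  · exact h
  · exact absurd (blockDisj hVsucc hB hC h hvj hvi) (by simp)

lemma cover (hV0 : Vs 0 = univ)
    (hVsucc : ∀ i : Fin k, Vs i.succ = Vs i.castSucc \ (B i ∪ C i))
    (hVlast : Vs (Fin.last k) = ∅) (v : V) : ∃ i : Fin k, v ∈ B i ∪ C i := by
  suffices h : ∀ d : ℕ, ∀ i : Fin (k+1), k - (i : ℕ) ≤ d → v ∈ Vs i → ∃ j : Fin k, v ∈ B j ∪ C j by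
    exact h k 0 (by omega) (by rw [hV0]; exact mem_univ v)
  intro d
  induction d with
  | zero =>
    intro i hi hv
    have : i = Fin.last k := Fin.ext (by have := i.isLt; simp only [Fin.val_last]; omega)
    rw [this, hVlast] at hv
    exact absurd hv (notMem_empty v)
  | succ d ih =>
    intro i hi hv
    by_cases hik : (i : ℕ) = k
    · rw [show i = Fin.last k from Fin.ext (by simp only [Fin.val_last]; omega), hVlast] at hv
      exact absurd hv (notMem_empty v)
    · have hik' : (i : ℕ) < k := by have := i.isLt; omega
      by_cases hbi : v ∈ B ⟨i, hik'⟩ ∪ C ⟨i, hik'⟩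
      · exact ⟨⟨i, hik'⟩, hbi⟩
      · apply ih (⟨i, hik'⟩ : Fin k).succ (by simp only [Fin.val_succ]; omega)
        rw [hVsucc ⟨i, hik'⟩]
        refine mem_sdiff.mpr ⟨?_, hbi⟩
        have hcs : (⟨i, hik'⟩ : Fin k).castSucc = i := Fin.ext rfl
        rwa [hcs]

lemma adjB (hV0 : Vs 0 = univ)
    (hVsucc : ∀ i : Fin k, Vs i.succ = Vs i.castSucc \ (B i ∪ C i))
    (hVlast : Vs (Fin.last k) = ∅)
    (hB : ∀ i : Fin k, IsMaxBottleneckIn G w (Vs i.castSucc) (B i))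
    (hC : ∀ i : Fin k, C i = nbhdIn G (Vs i.castSucc) (B i))
    {i : Fin k} {u : V} (hu : u ∈ B i) {v : V} (hadj : G.Adj u v) :
    ∃ j : Fin k, j ≤ i ∧ v ∈ C j := by
  have hcs_succ : ∀ l : Fin k, l.castSucc ≤ l.succ := by
    intro l; rw [Fin.le_def]; simp only [Fin.val_succ, Fin.coe_castSucc]; omega
  have hCint : v ∈ Vs i.castSucc → v ∈ C i := fun hvV => (memC hC).2 ⟨hvV, u, hu, hadj⟩
  obtain ⟨j, hvj⟩ := cover hV0 hVsucc hVlast v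
  rcases mem_union.mp hvj with hvB | hvC
  · rcases lt_trichotomy j i with h | h | h
    · exfalso
      have h2 : j.succ ≤ i.castSucc := by
        rw [Fin.le_def]; simp only [Fin.val_succ, Fin.coe_castSucc]
        exact Fin.lt_def.mp h
      have huV2 : u ∈ Vs j.succ := chainVs' hVsucc h2 ((hB i).2.1 hu)
      have huV : u ∈ Vs j.castSucc := chainVs' hVsucc (hcs_succ j) huV2
      have hu' : u ∈ C j := (memC hC).2 ⟨huV, v, hvB, hadj.symm⟩
      exact blockNotSucc hVsucc j (mem_union_right _ hu') huV2
    · subst h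
      exact ⟨j, le_refl j, hCint ((hB j).2.1 hvB)⟩
    · exfalso
      have h2 : i.succ ≤ j.castSucc := by
        rw [Fin.le_def]; simp only [Fin.val_succ, Fin.coe_castSucc]
        exact Fin.lt_def.mp h
      have hv2 : v ∈ Vs i.succ := chainVs' hVsucc h2 ((hB j).2.1 hvB)
      have hv3 : v ∈ Vs i.castSucc := chainVs' hVsucc (hcs_succ i) hv2
      exact blockNotSucc hVsucc i (mem_union_right _ (hCint hv3)) hv2
  · refine ⟨j, ?_, hvC⟩
    by_contra hji
    push_neg at hji
    have h2 : i.succ ≤ j.castSucc := by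
      rw [Fin.le_def]; simp only [Fin.val_succ, Fin.coe_castSucc]
      exact Fin.lt_def.mp hji
    have hv2 : v ∈ Vs i.succ := chainVs' hVsucc h2 (blockSub hB hC j (mem_union_right _ hvC))
    have hv3 : v ∈ Vs i.castSucc := chainVs' hVsucc (hcs_succ i) hv2
    exact blockNotSucc hVsucc i (mem_union_right _ (hCint hv3)) hv2

end BDStruct
section BDAlpha

set_option linter.unusedSectionVars false

open Finset

variable {V : Type*} [Fintype V] [DecidableEq V] {G : SimpleGraph V} [DecidableRel G.Adj]
variable {w : V → ℝ} {k : ℕ} {B C : Fin k → Finset V} {Vs : Fin (k+1) → Finset V}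

lemma Cne (hVsucc : ∀ i : Fin k, Vs i.succ = Vs i.castSucc \ (B i ∪ C i))
    (hB : ∀ i : Fin k, IsMaxBottleneckIn G w (Vs i.castSucc) (B i))
    (hC : ∀ i : Fin k, C i = nbhdIn G (Vs i.castSucc) (B i))
    {x : V → V → ℝ} (hx : IsBDAllocation G w k B C x) (i : Fin k) :
    (C i).Nonempty := by
  obtain ⟨u, hu⟩ := (hB i).1
  have hrow := hx.1.2.2 u
  have hex : ∃ v ∈ G.neighborFinset u, x u v ≠ 0 := by
    by_contra h
    push_neg at h
    rw [Finset.sum_eq_zero h] at hrow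
    exact one_ne_zero hrow.symm
  obtain ⟨v, _, hxv⟩ := hex
  obtain ⟨j, hj⟩ := hx.2.1 u v hxv
  rcases hj with ⟨huj, hvj⟩ | ⟨huj, hvj⟩
  · have hji : j = i := blockUniq hVsucc hB hC (mem_union_left _ huj) (mem_union_left _ hu)
    exact ⟨v, hji ▸ hvj⟩
  · have hji : j = i := blockUniq hVsucc hB hC (mem_union_right _ huj) (mem_union_left _ hu)
    exact ⟨u, hji ▸ huj⟩

lemma alphaIn_eq (hC : ∀ i : Fin k, C i = nbhdIn G (Vs i.castSucc) (B i)) (i : Fin k) :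
    alphaIn G w (Vs i.castSucc) (B i) = wsum w (C i) / wsum w (B i) := by
  rw [alphaIn, ← hC i]

lemma alpha_le_one (hw : ∀ v, 0 < w v)
    (hB : ∀ i : Fin k, IsMaxBottleneckIn G w (Vs i.castSucc) (B i))
    (hC : ∀ i : Fin k, C i = nbhdIn G (Vs i.castSucc) (B i)) (i : Fin k) :
    wsum w (C i) / wsum w (B i) ≤ 1 := by
  obtain ⟨b, hb⟩ := (hB i).1
  have hApos : 0 < wsum w (Vs i.castSucc) := wsum_pos hw ⟨b, (hB i).2.1 hb⟩
  have hmin := (hB i).2.2.1 (Vs i.castSucc) ⟨b, (hB i).2.1 hb⟩ subset_rfl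
  rw [alphaIn_eq hC] at hmin
  have hA1 : alphaIn G w (Vs i.castSucc) (Vs i.castSucc) ≤ 1 := by
    rw [alphaIn, div_le_one hApos]
    exact wsum_mono hw (filter_subset _ _)
  linarith

lemma alpha_pos (hw : ∀ v, 0 < w v)
    (hB : ∀ i : Fin k, IsMaxBottleneckIn G w (Vs i.castSucc) (B i))
    {i : Fin k} (hCne : (C i).Nonempty) :
    0 < wsum w (C i) / wsum w (B i) :=
  div_pos (wsum_pos hw hCne) (wsum_pos hw (hB i).1)

lemma alpha_lt_adj (hw : ∀ v, 0 < w v) (hV0 : Vs 0 = univ)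
    (hVsucc : ∀ i : Fin k, Vs i.succ = Vs i.castSucc \ (B i ∪ C i))
    (hVlast : Vs (Fin.last k) = ∅)
    (hB : ∀ i : Fin k, IsMaxBottleneckIn G w (Vs i.castSucc) (B i))
    (hC : ∀ i : Fin k, C i = nbhdIn G (Vs i.castSucc) (B i))
    {i j : Fin k} (hij : (j : ℕ) = (i : ℕ) + 1) :
    wsum w (C i) / wsum w (B i) < wsum w (C j) / wsum w (B j) := by
  have hcs_succ : ∀ l : Fin k, l.castSucc ≤ l.succ := by
    intro l; rw [Fin.le_def]; simp only [Fin.val_succ, Fin.coe_castSucc]; omega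
  have hjc : j.castSucc = i.succ := Fin.ext (by simp [hij])
  have hBjA : B j ⊆ Vs i.castSucc := fun v hv =>
    chainVs' hVsucc (hcs_succ i) (by rw [← hjc]; exact (hB j).2.1 hv)
  have hdisjBB : Disjoint (B i) (B j) := by
    rw [Finset.disjoint_left]
    intro a hai haj
    exact blockDisj hVsucc hB hC (show i < j by rw [Fin.lt_def]; omega)
      (mem_union_left _ hai) (mem_union_left _ haj)
  have hSA : B i ∪ B j ⊆ Vs i.castSucc := union_subset (hB i).2.1 hBjA
  have hss : B i ⊂ B i ∪ B j := by
    obtain ⟨b, hb⟩ := (hB j).1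
    refine (Finset.ssubset_iff_of_subset subset_union_left).2
      ⟨b, mem_union_right _ hb, fun hbi => ?_⟩
    exact Finset.disjoint_left.mp hdisjBB hbi hb
  have hmax := (hB i).2.2.2 (B i ∪ B j) hss hSA
  rw [alphaIn_eq hC] at hmax
  have hnb : nbhdIn G (Vs i.castSucc) (B i ∪ B j) ⊆ C i ∪ C j := by
    intro z hz
    rw [nbhdIn, mem_filter] at hz
    obtain ⟨hzA, u, huS, hadj⟩ := hz
    rcases mem_union.mp huS with hui | huj
    · exact mem_union_left _ ((memC hC).2 ⟨hzA, u, hui, hadj⟩)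
    · obtain ⟨l, hl, hzl⟩ := adjB hV0 hVsucc hVlast hB hC huj hadj
      have hli : (i : ℕ) ≤ (l : ℕ) := by
        by_contra hli
        push_neg at hli
        have h2 : l.succ ≤ i.castSucc := by
          rw [Fin.le_def]; simp only [Fin.val_succ, Fin.coe_castSucc]; omega
        exact blockNotSucc hVsucc l (mem_union_right _ hzl) (chainVs' hVsucc h2 hzA)
      have hlj : (l : ℕ) ≤ (j : ℕ) := Fin.le_def.mp hl
      rcases eq_or_lt_of_le hli with h | h
      · exact mem_union_left _ (show z ∈ C i by rw [show i = l from Fin.ext h]; exact hzl)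
      · exact mem_union_right _ (show z ∈ C j by rw [show j = l from Fin.ext (by omega)]; exact hzl)
  have hBpi := wsum_pos hw (hB i).1
  have hBpj := wsum_pos hw (hB j).1
  have hnum : wsum w (nbhdIn G (Vs i.castSucc) (B i ∪ B j)) ≤ wsum w (C i) + wsum w (C j) :=
    (wsum_mono hw hnb).trans (wsum_union_le hw _ _)
  have hub : alphaIn G w (Vs i.castSucc) (B i ∪ B j)
      ≤ (wsum w (C i) + wsum w (C j)) / (wsum w (B i) + wsum w (B j)) := by
    rw [alphaIn, wsum_union hdisjBB]
    exact (div_le_div_iff_of_pos_right (by positivity)).2 hnum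
  by_contra hcon
  push_neg at hcon
  have hcross : wsum w (C j) * wsum w (B i) ≤ wsum w (C i) * wsum w (B j) :=
    (div_le_div_iff₀ hBpj hBpi).1 hcon
  have hkey : (wsum w (C i) + wsum w (C j)) / (wsum w (B i) + wsum w (B j))
      ≤ wsum w (C i) / wsum w (B i) := by
    rw [div_le_div_iff₀ (by positivity) hBpi]
    nlinarith
  linarith [hmax.trans_le (hub.trans hkey)]

end BDAlpha
section BDBeta

set_option linter.unusedSectionVars false

open Finset

variable {V : Type*} [Fintype V] [DecidableEq V] {G : SimpleGraph V} [DecidableRel G.Adj]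
variable {w : V → ℝ} {k : ℕ} {B C : Fin k → Finset V} {Vs : Fin (k+1) → Finset V}

lemma alpha_lt (hw : ∀ v, 0 < w v) (hV0 : Vs 0 = univ)
    (hVsucc : ∀ i : Fin k, Vs i.succ = Vs i.castSucc \ (B i ∪ C i))
    (hVlast : Vs (Fin.last k) = ∅)
    (hB : ∀ i : Fin k, IsMaxBottleneckIn G w (Vs i.castSucc) (B i))
    (hC : ∀ i : Fin k, C i = nbhdIn G (Vs i.castSucc) (B i))
    {i j : Fin k} (hij : i < j) :
    wsum w (C i) / wsum w (B i) < wsum w (C j) / wsum w (B j) := by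
  suffices h : ∀ d : ℕ, ∀ a b : Fin k, (b : ℕ) = (a : ℕ) + d + 1 →
      wsum w (C a) / wsum w (B a) < wsum w (C b) / wsum w (B b) by
    exact h ((j : ℕ) - (i : ℕ) - 1) i j (by have := Fin.lt_def.mp hij; omega)
  intro d
  induction d with
  | zero =>
    intro a b h
    exact alpha_lt_adj hw hV0 hVsucc hVlast hB hC (by omega)
  | succ d ih =>
    intro a b h
    have hm : (a : ℕ) + d + 1 < k := by have := b.isLt; omega
    exact (ih a ⟨(a : ℕ) + d + 1, hm⟩ rfl).trans
      (alpha_lt_adj hw hV0 hVsucc hVlast hB hC (by simp; omega))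

lemma overlap_wsum_eq (hw : ∀ v, 0 < w v)
    (hB : ∀ i : Fin k, IsMaxBottleneckIn G w (Vs i.castSucc) (B i))
    (hC : ∀ i : Fin k, C i = nbhdIn G (Vs i.castSucc) (B i))
    {i : Fin k} (hov : (B i ∩ C i).Nonempty) :
    wsum w (C i) = wsum w (B i) := by
  have hBpos := wsum_pos hw (hB i).1
  have hle : wsum w (C i) ≤ wsum w (B i) := by
    have h1 := alpha_le_one hw hB hC i
    rw [div_le_one hBpos] at h1
    exact h1
  refine le_antisymm hle ?_
  by_cases hBC : B i ⊆ C i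
  · exact wsum_mono hw hBC
  · obtain ⟨b, hbB, hbC⟩ := Finset.not_subset.1 hBC
    have hne : (B i \ C i).Nonempty := ⟨b, mem_sdiff.2 ⟨hbB, hbC⟩⟩
    have hmin := (hB i).2.2.1 (B i \ C i) hne (Finset.sdiff_subset.trans (hB i).2.1)
    rw [alphaIn_eq hC, alphaIn] at hmin
    have hpos2 := wsum_pos hw hne
    have hcross : wsum w (C i) * wsum w (B i \ C i)
        ≤ wsum w (nbhdIn G (Vs i.castSucc) (B i \ C i)) * wsum w (B i) :=
      (div_le_div_iff₀ hBpos hpos2).1 hmin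
    have hsub : nbhdIn G (Vs i.castSucc) (B i \ C i) ⊆ C i \ B i := by
      intro z hz
      rw [nbhdIn, mem_filter] at hz
      obtain ⟨hzA, u, huBC, hadj⟩ := hz
      rw [mem_sdiff] at huBC
      have hzC : z ∈ C i := (memC hC).2 ⟨hzA, u, huBC.1, hadj⟩
      refine mem_sdiff.mpr ⟨hzC, fun hzB => ?_⟩
      exact huBC.2 ((memC hC).2 ⟨(hB i).2.1 huBC.1, z, hzB, hadj.symm⟩)
    have hNle : wsum w (nbhdIn G (Vs i.castSucc) (B i \ C i)) ≤ wsum w (C i \ B i) :=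
      wsum_mono hw hsub
    have hd1 : wsum w (B i \ C i) = wsum w (B i) - wsum w (B i ∩ C i) := by
      rw [show B i \ C i = B i \ (B i ∩ C i) from by rw [Finset.sdiff_inter_self_left]]
      exact wsum_sdiff' Finset.inter_subset_left
    have hd2 : wsum w (C i \ B i) = wsum w (C i) - wsum w (B i ∩ C i) := by
      rw [show C i \ B i = C i \ (B i ∩ C i) from by
        rw [Finset.inter_comm, Finset.sdiff_inter_self_left]]
      exact wsum_sdiff' Finset.inter_subset_right
    have hovpos := wsum_pos hw hov
    rw [hd1] at hcross
    rw [hd2] at hNle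
    nlinarith [mul_le_mul_of_nonneg_right hNle hBpos.le]

lemma sdiff_wsum_cross (hw : ∀ v, 0 < w v)
    (hB : ∀ i : Fin k, IsMaxBottleneckIn G w (Vs i.castSucc) (B i))
    (hC : ∀ i : Fin k, C i = nbhdIn G (Vs i.castSucc) (B i)) (i : Fin k) :
    wsum w (C i \ B i) * wsum w (B i) = wsum w (C i) * wsum w (B i \ C i) := by
  have hd1 : wsum w (B i \ C i) = wsum w (B i) - wsum w (B i ∩ C i) := by
    rw [show B i \ C i = B i \ (B i ∩ C i) from by rw [Finset.sdiff_inter_self_left]]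
    exact wsum_sdiff' Finset.inter_subset_left
  have hd2 : wsum w (C i \ B i) = wsum w (C i) - wsum w (B i ∩ C i) := by
    rw [show C i \ B i = C i \ (B i ∩ C i) from by
      rw [Finset.inter_comm, Finset.sdiff_inter_self_left]]
    exact wsum_sdiff' Finset.inter_subset_right
  by_cases hov : (B i ∩ C i).Nonempty
  · have he := overlap_wsum_eq hw hB hC hov
    rw [hd1, hd2, he]
    ring
  · have hd : wsum w (B i ∩ C i) = 0 := by
      rw [not_nonempty_iff_eq_empty.1 hov]
      simp [wsum]
    rw [hd1, hd2, hd]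
    ring

lemma exRatio_x_B (hw : ∀ v, 0 < w v)
    (hVsucc : ∀ i : Fin k, Vs i.succ = Vs i.castSucc \ (B i ∪ C i))
    (hB : ∀ i : Fin k, IsMaxBottleneckIn G w (Vs i.castSucc) (B i))
    (hC : ∀ i : Fin k, C i = nbhdIn G (Vs i.castSucc) (B i))
    {x : V → V → ℝ} (hx : IsBDAllocation G w k B C x)
    {i : Fin k} {u : V} (hu : u ∈ B i) :
    exRatio G w x u = wsum w (C i) / wsum w (B i) := by
  have hterm : ∀ v ∈ G.neighborFinset u,
      x v u * w v = wsum w (C i) / wsum w (B i) * (x u v * w u) := by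
    intro v hv
    rw [SimpleGraph.mem_neighborFinset] at hv
    by_cases hvu : x v u = 0
    · rw [hvu, zero_mul]
      by_cases huv : x u v = 0
      · rw [huv]; ring
      · obtain ⟨j, hj⟩ := hx.2.1 u v huv
        rcases hj with ⟨huj, hvj⟩ | ⟨huj, hvj⟩
        · have hji : j = i := blockUniq hVsucc hB hC (mem_union_left _ huj) (mem_union_left _ hu)
          subst hji
          have hrule := hx.2.2 j u huj v hvj hv
          rw [hvu, zero_mul] at hrule
          exact hrule
        · have hji : j = i := blockUniq hVsucc hB hC (mem_union_right _ huj) (mem_union_left _ hu)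
          subst hji
          have hrule := hx.2.2 j v hvj u huj hv.symm
          rw [hvu, zero_mul, mul_zero] at hrule
          rw [hrule, mul_zero]
    · obtain ⟨j, hj⟩ := hx.2.1 v u hvu
      rcases hj with ⟨hvj, huj⟩ | ⟨hvj, huj⟩
      · have hji : j = i := blockUniq hVsucc hB hC (mem_union_right _ huj) (mem_union_left _ hu)
        subst hji
        have hov : (B j ∩ C j).Nonempty := ⟨u, mem_inter.2 ⟨hu, huj⟩⟩
        have he := overlap_wsum_eq hw hB hC hov
        have hα1 : wsum w (C j) / wsum w (B j) = 1 := by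
          rw [he]; exact div_self (ne_of_gt (wsum_pos hw (hB j).1))
        have hrule := hx.2.2 j v hvj u huj hv.symm
        rw [hα1, one_mul] at hrule ⊢
        exact hrule.symm
      · have hji : j = i := blockUniq hVsucc hB hC (mem_union_left _ huj) (mem_union_left _ hu)
        subst hji
        exact hx.2.2 j u huj v hvj hv
  have hsum : ∑ v ∈ G.neighborFinset u, wsum w (C i) / wsum w (B i) * (x u v * w u)
      = wsum w (C i) / wsum w (B i) * w u * ∑ v ∈ G.neighborFinset u, x u v := by
    rw [Finset.mul_sum]
    exact Finset.sum_congr rfl fun v _ => by ring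
  have hutil : util G w x u = wsum w (C i) / wsum w (B i) * w u := by
    rw [util, Finset.sum_congr rfl hterm, hsum, hx.1.2.2 u, mul_one]
  rw [exRatio, hutil, mul_div_cancel_right₀ _ (ne_of_gt (hw u))]

lemma exRatio_x_C (hw : ∀ v, 0 < w v)
    (hVsucc : ∀ i : Fin k, Vs i.succ = Vs i.castSucc \ (B i ∪ C i))
    (hB : ∀ i : Fin k, IsMaxBottleneckIn G w (Vs i.castSucc) (B i))
    (hC : ∀ i : Fin k, C i = nbhdIn G (Vs i.castSucc) (B i))
    {x : V → V → ℝ} (hx : IsBDAllocation G w k B C x)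
    {i : Fin k} {u : V} (hu : u ∈ C i) (huB : u ∉ B i) (hCne : (C i).Nonempty) :
    exRatio G w x u = wsum w (B i) / wsum w (C i) := by
  have hBpos := wsum_pos hw (hB i).1
  have hCpos := wsum_pos hw hCne
  have hterm : ∀ v ∈ G.neighborFinset u,
      x v u * w v = wsum w (B i) / wsum w (C i) * (x u v * w u) := by
    intro v hv
    rw [SimpleGraph.mem_neighborFinset] at hv
    by_cases hvu : x v u = 0
    · rw [hvu, zero_mul]
      by_cases huv : x u v = 0
      · rw [huv]; ring
      · obtain ⟨j, hj⟩ := hx.2.1 u v huv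
        rcases hj with ⟨huj, hvj⟩ | ⟨huj, hvj⟩
        · have hji : j = i := blockUniq hVsucc hB hC (mem_union_left _ huj) (mem_union_right _ hu)
          subst hji
          exact absurd huj huB
        · have hji : j = i := blockUniq hVsucc hB hC (mem_union_right _ huj) (mem_union_right _ hu)
          subst hji
          have hrule := hx.2.2 j v hvj u huj hv.symm
          rw [hvu, zero_mul, mul_zero] at hrule
          rw [hrule, mul_zero]
    · obtain ⟨j, hj⟩ := hx.2.1 v u hvu
      rcases hj with ⟨hvj, huj⟩ | ⟨hvj, huj⟩
      · have hji : j = i := blockUniq hVsucc hB hC (mem_union_right _ huj) (mem_union_right _ hu)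
        subst hji
        have hrule := hx.2.2 j v hvj u huj hv.symm
        rw [hrule]
        field_simp
      · have hji : j = i := blockUniq hVsucc hB hC (mem_union_left _ huj) (mem_union_right _ hu)
        subst hji
        exact absurd huj huB
  have hsum : ∑ v ∈ G.neighborFinset u, wsum w (B i) / wsum w (C i) * (x u v * w u)
      = wsum w (B i) / wsum w (C i) * w u * ∑ v ∈ G.neighborFinset u, x u v := by
    rw [Finset.mul_sum]
    exact Finset.sum_congr rfl fun v _ => by ring
  have hutil : util G w x u = wsum w (B i) / wsum w (C i) * w u := by
    rw [util, Finset.sum_congr rfl hterm, hsum, hx.1.2.2 u, mul_one]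
  rw [exRatio, hutil, mul_div_cancel_right₀ _ (ne_of_gt (hw u))]

end BDBeta
section BDMain

set_option linter.unusedSectionVars false
set_option maxHeartbeats 1000000

open Finset

variable {V : Type*} [Fintype V] [DecidableEq V]

lemma card_filter_equiv {n : ℕ} (e : Fin n ≃ V) (p : V → Prop) [DecidablePred p] :
    (univ.filter fun j => p (e j)).card = (univ.filter p).card :=
  Finset.card_nbij' (fun j => e j) (fun u => e.symm u)
    (fun j hj => by
      rw [mem_coe, mem_filter] at hj ⊢
      exact ⟨mem_univ _, hj.2⟩)
    (fun u hu => by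
      rw [mem_coe, mem_filter] at hu ⊢
      refine ⟨mem_univ _, ?_⟩
      rw [e.apply_symm_apply]
      exact hu.2)
    (fun j _ => e.symm_apply_apply j)
    (fun u _ => e.apply_symm_apply u)

theorem bd_mechanism_lex_optimal' {V : Type*} [Fintype V] [DecidableEq V]
    (G : SimpleGraph V) [DecidableRel G.Adj] (w : V → ℝ)
    (hw : ∀ v, 0 < w v) (hconn : G.Connected) (hcard : 2 ≤ Fintype.card V)
    (k : ℕ) (B C : Fin k → Finset V) (Vs : Fin (k + 1) → Finset V)
    (hV0 : Vs 0 = univ)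
    (hVsucc : ∀ i : Fin k, Vs i.succ = Vs i.castSucc \ (B i ∪ C i))
    (hVlast : Vs (Fin.last k) = ∅)
    (hB : ∀ i : Fin k, IsMaxBottleneckIn G w (Vs i.castSucc) (B i))
    (hC : ∀ i : Fin k, C i = nbhdIn G (Vs i.castSucc) (B i))
    (x : V → V → ℝ) (hx : IsBDAllocation G w k B C x) :
    LexOptimal G w x := by
  classical
  intro y hy e e' hmx hmy
  set s : Fin (Fintype.card V) → ℝ := fun i => exRatio G w x (e i) with hs
  set t : Fin (Fintype.card V) → ℝ := fun i => exRatio G w y (e' i) with ht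
  by_cases heq : t = s
  · exact Or.inl heq
  have hD : (univ.filter fun j : Fin (Fintype.card V) => ¬ (t j = s j)).Nonempty := by
    by_contra h
    rw [not_nonempty_iff_eq_empty] at h
    apply heq
    funext j
    by_contra hj
    have hjD : j ∈ univ.filter fun j : Fin (Fintype.card V) => ¬ (t j = s j) :=
      mem_filter.2 ⟨mem_univ _, hj⟩
    rw [h] at hjD
    exact notMem_empty _ hjD
  set m := Finset.min' _ hD with hm
  have hmem := Finset.min'_mem _ hD
  have hagree : ∀ j, j < m → t j = s j := by
    intro j hj
    by_contra hne
    exact absurd (Finset.min'_le _ j (mem_filter.2 ⟨mem_univ _, hne⟩)) (not_le.2 hj)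
  have hne_m : ¬ (t m = s m) := (mem_filter.1 hmem).2
  rcases lt_or_gt_of_ne hne_m with hlt | hgt
  · exact Or.inr ⟨m, hagree, hlt⟩
  exfalso
  -- notation
  set θ := s m with hθ
  set α : Fin k → ℝ := fun i => wsum w (C i) / wsum w (B i) with hα
  set γ : Fin k → ℝ := fun i => wsum w (B i) / wsum w (C i) with hγ
  have hcov : ∀ u : V, ∃ i : Fin k, u ∈ B i ∪ C i := cover hV0 hVsucc hVlast
  have hCne : ∀ i : Fin k, (C i).Nonempty := Cne hVsucc hB hC hx
  have hBpos : ∀ i : Fin k, 0 < wsum w (B i) := fun i => wsum_pos hw (hB i).1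
  have hCpos : ∀ i : Fin k, 0 < wsum w (C i) := fun i => wsum_pos hw (hCne i)
  have hαpos : ∀ i, 0 < α i := fun i => alpha_pos hw hB (hCne i)
  have hα1 : ∀ i, α i ≤ 1 := fun i => alpha_le_one hw hB hC i
  have hαmono : ∀ {i j : Fin k}, i < j → α i < α j := fun {i j} h =>
    alpha_lt hw hV0 hVsucc hVlast hB hC h
  have hγ1 : ∀ i, 1 ≤ γ i := by
    intro i
    rw [hγ, le_div_iff₀ (hCpos i)]
    have := hα1 i
    rw [hα, div_le_one (hBpos i)] at this
    linarith
  have hγanti : ∀ {i j : Fin k}, i < j → γ j < γ i := by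
    intro i j h
    have h1 := hαmono h
    rw [hα, div_lt_div_iff₀ (hBpos i) (hBpos j)] at h1
    rw [hγ, div_lt_div_iff₀ (hCpos j) (hCpos i)]
    nlinarith
  have hβxB : ∀ (i : Fin k) (u : V), u ∈ B i → exRatio G w x u = α i := fun i u hu =>
    exRatio_x_B hw hVsucc hB hC hx hu
  have hβxC : ∀ (i : Fin k) (u : V), u ∈ C i → u ∉ B i → exRatio G w x u = γ i :=
    fun i u hu huB => exRatio_x_C hw hVsucc hB hC hx hu huB (hCne i)
  -- the counting lemma
  have cardeq : ∀ v : ℝ, v ≤ θ →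
      (univ.filter fun u : V => exRatio G w y u < v).card
        = (univ.filter fun u : V => exRatio G w x u < v).card := by
    intro v hv
    have h1 : (univ.filter fun j : Fin (Fintype.card V) => t j < v).card
        = (univ.filter fun u : V => exRatio G w y u < v).card :=
      card_filter_equiv e' (fun u => exRatio G w y u < v)
    have h2 : (univ.filter fun j : Fin (Fintype.card V) => s j < v).card
        = (univ.filter fun u : V => exRatio G w x u < v).card :=
      card_filter_equiv e (fun u => exRatio G w x u < v)
    have hset : (univ.filter fun j : Fin (Fintype.card V) => t j < v)
        = (univ.filter fun j : Fin (Fintype.card V) => s j < v) := by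
      ext j
      simp only [mem_filter, mem_univ, true_and]
      constructor
      · intro hj
        have hjm : j < m := by
          by_contra hjm
          push_neg at hjm
          have h3 : t m ≤ t j := hmy hjm
          linarith
        rw [← hagree j hjm]
        exact hj
      · intro hj
        have hjm : j < m := by
          by_contra hjm
          push_neg at hjm
          have h3 : s m ≤ s j := hmx hjm
          linarith
        rw [hagree j hjm]
        exact hj
    rw [← h1, ← h2, hset]

  -- Phase 1 forcing: blocks B i with α i ≤ θ
  have key1N : ∀ N : ℕ, ∀ i : Fin k, (i : ℕ) < N → α i ≤ θ →
      (∀ u ∈ B i, exRatio G w y u = α i) ∧ (∀ v ∈ C i, paysum y v (B i) = 1) := by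
    intro N
    induction N with
    | zero => intro i h; exact absurd h (Nat.not_lt_zero _)
    | succ N IH =>
      intro i hiN hαθ
      have IH' : ∀ j : Fin k, j < i → α j ≤ θ →
          (∀ u ∈ B j, exRatio G w y u = α j) ∧ (∀ v ∈ C j, paysum y v (B j) = 1) := by
        intro j hj hjθ
        exact IH j (by have h1 := Fin.lt_def.mp hj; omega) hjθ
      have hBlow : ∀ u ∈ B i, α i ≤ exRatio G w y u := by
        intro u hu
        by_contra hlow
        push_neg at hlow
        have hsub : (univ.filter fun z : V => exRatio G w x z < α i)
            ⊆ univ.filter fun z : V => exRatio G w y z < α i := by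
          intro z hz
          have hz2 : exRatio G w x z < α i := (mem_filter.1 hz).2
          refine mem_filter.2 ⟨mem_univ _, ?_⟩
          obtain ⟨j, hzj⟩ := hcov z
          by_cases hzB : z ∈ B j
          · have hβ := hβxB j z hzB
            rw [hβ] at hz2
            have hji : j < i := by
              rcases lt_trichotomy j i with h | h | h
              · exact h
              · exfalso; rw [h] at hz2; exact lt_irrefl _ hz2
              · exact absurd (hαmono h) (by linarith)
            rw [(IH' j hji (le_trans hz2.le hαθ)).1 z hzB]
            exact hz2
          · have hzC := (mem_union.mp hzj).resolve_left hzB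
            have hβ := hβxC j z hzC hzB
            rw [hβ] at hz2
            exfalso
            have h1 := hγ1 j
            have h2 := hα1 i
            linarith
        have hEq := Finset.eq_of_subset_of_card_le hsub (le_of_eq (cardeq (α i) hαθ))
        have hufy : u ∈ univ.filter fun z : V => exRatio G w y z < α i :=
          mem_filter.2 ⟨mem_univ _, hlow⟩
        rw [← hEq] at hufy
        have h2 := (mem_filter.1 hufy).2
        rw [hβxB i u hu] at h2
        exact lt_irrefl _ h2
      have hpay0 : ∀ v : V, v ∉ C i → paysum y v (B i) = 0 := by
        intro v hvC
        obtain ⟨j, hvj⟩ := hcov v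
        by_cases hvB : v ∈ B j
        · apply paysum_zero_of_no_adj hy
          intro u huB hadj
          obtain ⟨l, hl, hul⟩ := adjB hV0 hVsucc hVlast hB hC hvB hadj
          have hli : l = i :=
            blockUniq hVsucc hB hC (mem_union_right _ hul) (mem_union_left _ huB)
          subst hli
          obtain ⟨l', hl', hvl'⟩ := adjB hV0 hVsucc hVlast hB hC huB hadj.symm
          have hlj : l' = j :=
            blockUniq hVsucc hB hC (mem_union_right _ hvl') (mem_union_left _ hvB)
          subst hlj
          have hei := overlap_wsum_eq hw hB hC ⟨u, mem_inter.2 ⟨huB, hul⟩⟩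
          have hej := overlap_wsum_eq hw hB hC ⟨v, mem_inter.2 ⟨hvB, hvl'⟩⟩
          have e1 : α l = 1 := by
            simp only [hα]
            rw [hei]
            exact div_self (ne_of_gt (hBpos l))
          have e2 : α l' = 1 := by
            simp only [hα]
            rw [hej]
            exact div_self (ne_of_gt (hBpos l'))
          have hij3 : l = l' := by
            by_contra hne2
            rcases lt_or_gt_of_ne hne2 with h | h
            · have := hαmono h; linarith
            · have := hαmono h; linarith
          exact hvC (hij3 ▸ hvl')
        · have hvCj : v ∈ C j := (mem_union.mp hvj).resolve_left hvB
          by_cases hji : j = i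
          · exact absurd (hji ▸ hvCj) hvC
          rcases lt_or_gt_of_ne hji with h | h
          · have hdisj : Disjoint (B i) (B j) := by
              rw [Finset.disjoint_left]
              intro a hai haj
              exact blockDisj hVsucc hB hC h (mem_union_left _ haj) (mem_union_left _ hai)
            exact paysum_zero_of_one hy
              ((IH' j h (le_trans (hαmono h).le hαθ)).2 v hvCj) hdisj
          · apply paysum_zero_of_no_adj hy
            intro u huB hadj
            obtain ⟨l, hl, hvl⟩ := adjB hV0 hVsucc hVlast hB hC huB hadj.symm
            have hlj : l = j :=
              blockUniq hVsucc hB hC (mem_union_right _ hvl) (mem_union_right _ hvCj)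
            subst hlj
            have h1 := Fin.le_def.mp hl
            have h2 := Fin.lt_def.mp h
            omega
      have hM1 : ∑ u ∈ B i, util G w y u = ∑ v ∈ univ, w v * paysum y v (B i) :=
        util_sum w hy (B i)
      have hM2 : ∑ v ∈ univ, w v * paysum y v (B i) = ∑ v ∈ C i, w v * paysum y v (B i) := by
        symm
        apply Finset.sum_subset (subset_univ _)
        intro v _ hvC
        rw [hpay0 v hvC, mul_zero]
      have hM3 : ∑ v ∈ C i, w v * paysum y v (B i) ≤ wsum w (C i) := by
        rw [wsum]
        apply Finset.sum_le_sum
        intro v _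
        calc w v * paysum y v (B i) ≤ w v * 1 :=
              mul_le_mul_of_nonneg_left (paysum_le_one hy v _) (hw v).le
          _ = w v := mul_one _
      have hM4 : α i * wsum w (B i) ≤ ∑ u ∈ B i, util G w y u := by
        have hterm : ∀ u ∈ B i, α i * w u ≤ util G w y u := by
          intro u hu
          rw [util_eq_exRatio_mul w hw y u]
          exact mul_le_mul_of_nonneg_right (hBlow u hu) (hw u).le
        calc α i * wsum w (B i) = ∑ u ∈ B i, α i * w u := by rw [wsum, Finset.mul_sum]
          _ ≤ _ := Finset.sum_le_sum hterm
      have hαB : α i * wsum w (B i) = wsum w (C i) := by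
        simp only [hα]
        exact div_mul_cancel₀ _ (ne_of_gt (hBpos i))
      have hEqU : ∑ u ∈ B i, util G w y u = wsum w (C i) := by linarith
      have hEqP : ∑ v ∈ C i, w v * paysum y v (B i) = wsum w (C i) := by linarith
      constructor
      · intro u hu
        have hsum0 : ∑ u ∈ B i, (exRatio G w y u - α i) * w u = 0 := by
          have hexp : ∑ u ∈ B i, (exRatio G w y u - α i) * w u
              = (∑ u ∈ B i, util G w y u) - α i * wsum w (B i) := by
            rw [wsum, Finset.mul_sum, ← Finset.sum_sub_distrib]
            exact Finset.sum_congr rfl fun u _ => by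
              rw [util_eq_exRatio_mul w hw y u]; ring
          rw [hexp, hEqU, hαB]
          exact sub_self _
        have hnn : ∀ z ∈ B i, 0 ≤ (exRatio G w y z - α i) * w z := fun z hz =>
          mul_nonneg (by linarith [hBlow z hz]) (hw z).le
        have hterm := (Finset.sum_eq_zero_iff_of_nonneg hnn).1 hsum0 u hu
        rcases mul_eq_zero.1 hterm with h0 | h0
        · linarith
        · exact absurd h0 (ne_of_gt (hw u))
      · intro v hv
        have hsum0 : ∑ v ∈ C i, w v * (1 - paysum y v (B i)) = 0 := by
          have hexp : ∑ v ∈ C i, w v * (1 - paysum y v (B i))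
              = wsum w (C i) - ∑ v ∈ C i, w v * paysum y v (B i) := by
            rw [wsum, ← Finset.sum_sub_distrib]
            exact Finset.sum_congr rfl fun v _ => by ring
          rw [hexp, hEqP]
          exact sub_self _
        have hnn : ∀ z ∈ C i, 0 ≤ w z * (1 - paysum y z (B i)) := fun z _ =>
          mul_nonneg (hw z).le (by linarith [paysum_le_one hy z (B i)])
        have hterm := (Finset.sum_eq_zero_iff_of_nonneg hnn).1 hsum0 v hv
        rcases mul_eq_zero.1 hterm with h0 | h0
        · exact absurd h0 (ne_of_gt (hw v))
        · linarith
  have key1 : ∀ i : Fin k, α i ≤ θ →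
      (∀ u ∈ B i, exRatio G w y u = α i) ∧ (∀ v ∈ C i, paysum y v (B i) = 1) :=
    fun i h => key1N ((i : ℕ) + 1) i (Nat.lt_succ_self _) h
  -- Phase 2 forcing: fibers C i \ B i with γ i ≤ θ
  have key2N : ∀ N : ℕ, ∀ i : Fin k, k - (i : ℕ) ≤ N → γ i ≤ θ →
      (∀ u ∈ C i \ B i, exRatio G w y u = γ i) ∧
        (∀ v ∈ B i \ C i, paysum y v (C i \ B i) = 1) := by
    intro N
    induction N with
    | zero => intro i h; exfalso; have := i.isLt; omega
    | succ N IH =>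
      intro i hiN hγθ
      have IH' : ∀ j : Fin k, i < j → γ j ≤ θ →
          (∀ u ∈ C j \ B j, exRatio G w y u = γ j) ∧
            (∀ v ∈ B j \ C j, paysum y v (C j \ B j) = 1) := by
        intro j hj hjθ
        exact IH j (by have h1 := Fin.lt_def.mp hj; have h2 := j.isLt; omega) hjθ
      have key1all : ∀ j : Fin k,
          (∀ u ∈ B j, exRatio G w y u = α j) ∧ (∀ v ∈ C j, paysum y v (B j) = 1) :=
        fun j => key1 j (le_trans (le_trans (hα1 j) (hγ1 i)) hγθ)
      have hClow : ∀ u ∈ C i \ B i, γ i ≤ exRatio G w y u := by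
        intro u hu
        by_contra hlow
        push_neg at hlow
        have hsub : (univ.filter fun z : V => exRatio G w x z < γ i)
            ⊆ univ.filter fun z : V => exRatio G w y z < γ i := by
          intro z hz
          have hz2 : exRatio G w x z < γ i := (mem_filter.1 hz).2
          refine mem_filter.2 ⟨mem_univ _, ?_⟩
          obtain ⟨j, hzj⟩ := hcov z
          by_cases hzB : z ∈ B j
          · have hβ := hβxB j z hzB
            rw [hβ] at hz2
            rw [(key1all j).1 z hzB]
            exact hz2
          · have hzC := (mem_union.mp hzj).resolve_left hzB
            have hβ := hβxC j z hzC hzB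
            rw [hβ] at hz2
            have hij : i < j := by
              rcases lt_trichotomy i j with h | h | h
              · exact h
              · exfalso; rw [← h] at hz2; exact lt_irrefl _ hz2
              · exact absurd (hγanti h) (by linarith)
            rw [(IH' j hij (le_trans hz2.le hγθ)).1 z (mem_sdiff.2 ⟨hzC, hzB⟩)]
            exact hz2
        have hEq := Finset.eq_of_subset_of_card_le hsub (le_of_eq (cardeq (γ i) hγθ))
        have hufy : u ∈ univ.filter fun z : V => exRatio G w y z < γ i :=
          mem_filter.2 ⟨mem_univ _, hlow⟩
        rw [← hEq] at hufy
        have h2 := (mem_filter.1 hufy).2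
        rw [hβxC i u (mem_sdiff.1 hu).1 (mem_sdiff.1 hu).2] at h2
        exact lt_irrefl _ h2
      have hpay0 : ∀ v : V, v ∉ B i \ C i → paysum y v (C i \ B i) = 0 := by
        intro v hv
        obtain ⟨j, hvj⟩ := hcov v
        by_cases hvC : v ∈ C j
        · have hdisj : Disjoint (C i \ B i) (B j) := by
            rw [Finset.disjoint_left]
            intro a ha haj
            have haC := (mem_sdiff.1 ha).1
            have haB := (mem_sdiff.1 ha).2
            have hij : i = j :=
              blockUniq hVsucc hB hC (mem_union_right _ haC) (mem_union_left _ haj)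
            exact haB (hij ▸ haj)
          exact paysum_zero_of_one hy ((key1all j).2 v hvC) hdisj
        · have hvB : v ∈ B j := (mem_union.mp hvj).resolve_right hvC
          by_cases hji : j = i
          · subst hji
            exact absurd (mem_sdiff.2 ⟨hvB, hvC⟩) hv
          rcases lt_or_gt_of_ne hji with h | h
          · apply paysum_zero_of_no_adj hy
            intro c hc hadj
            obtain ⟨l, hl, hcl⟩ := adjB hV0 hVsucc hVlast hB hC hvB hadj
            have hli : l = i := blockUniq hVsucc hB hC (mem_union_right _ hcl)
              (mem_union_right _ (mem_sdiff.1 hc).1)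
            subst hli
            have h1 := Fin.le_def.mp hl
            have h2 := Fin.lt_def.mp h
            omega
          · have hdisj : Disjoint (C i \ B i) (C j \ B j) := by
              rw [Finset.disjoint_left]
              intro a ha haj
              have hij : i = j := blockUniq hVsucc hB hC
                (mem_union_right _ (mem_sdiff.1 ha).1)
                (mem_union_right _ (mem_sdiff.1 haj).1)
              rw [hij] at h
              exact lt_irrefl _ h
            have hγj : γ j ≤ θ := le_trans (hγanti h).le hγθ
            exact paysum_zero_of_one hy
              ((IH' j h hγj).2 v (mem_sdiff.2 ⟨hvB, hvC⟩)) hdisj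
      have hM1 : ∑ u ∈ C i \ B i, util G w y u
          = ∑ v ∈ univ, w v * paysum y v (C i \ B i) := util_sum w hy (C i \ B i)
      have hM2 : ∑ v ∈ univ, w v * paysum y v (C i \ B i)
          = ∑ v ∈ B i \ C i, w v * paysum y v (C i \ B i) := by
        symm
        apply Finset.sum_subset (subset_univ _)
        intro v _ hv
        rw [hpay0 v hv, mul_zero]
      have hM3 : ∑ v ∈ B i \ C i, w v * paysum y v (C i \ B i) ≤ wsum w (B i \ C i) := by
        rw [wsum]
        apply Finset.sum_le_sum
        intro v _
        calc w v * paysum y v (C i \ B i) ≤ w v * 1 :=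
              mul_le_mul_of_nonneg_left (paysum_le_one hy v _) (hw v).le
          _ = w v := mul_one _
      have hM4 : γ i * wsum w (C i \ B i) ≤ ∑ u ∈ C i \ B i, util G w y u := by
        have hterm : ∀ u ∈ C i \ B i, γ i * w u ≤ util G w y u := by
          intro u hu
          rw [util_eq_exRatio_mul w hw y u]
          exact mul_le_mul_of_nonneg_right (hClow u hu) (hw u).le
        calc γ i * wsum w (C i \ B i) = ∑ u ∈ C i \ B i, γ i * w u := by
              rw [wsum, Finset.mul_sum]
          _ ≤ _ := Finset.sum_le_sum hterm
      have hid : γ i * wsum w (C i \ B i) = wsum w (B i \ C i) := by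
        have hcross := sdiff_wsum_cross hw hB hC i
        simp only [hγ]
        rw [div_mul_eq_mul_div, div_eq_iff (ne_of_gt (hCpos i))]
        linear_combination hcross
      have hEqU : ∑ u ∈ C i \ B i, util G w y u = wsum w (B i \ C i) := by linarith
      have hEqP : ∑ v ∈ B i \ C i, w v * paysum y v (C i \ B i)
          = wsum w (B i \ C i) := by linarith
      constructor
      · intro u hu
        have hsum0 : ∑ u ∈ C i \ B i, (exRatio G w y u - γ i) * w u = 0 := by
          have hexp : ∑ u ∈ C i \ B i, (exRatio G w y u - γ i) * w u
              = (∑ u ∈ C i \ B i, util G w y u) - γ i * wsum w (C i \ B i) := by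
            rw [wsum, Finset.mul_sum, ← Finset.sum_sub_distrib]
            exact Finset.sum_congr rfl fun u _ => by
              rw [util_eq_exRatio_mul w hw y u]; ring
          rw [hexp, hEqU, hid]
          exact sub_self _
        have hnn : ∀ z ∈ C i \ B i, 0 ≤ (exRatio G w y z - γ i) * w z := fun z hz =>
          mul_nonneg (by linarith [hClow z hz]) (hw z).le
        have hterm := (Finset.sum_eq_zero_iff_of_nonneg hnn).1 hsum0 u hu
        rcases mul_eq_zero.1 hterm with h0 | h0
        · linarith
        · exact absurd h0 (ne_of_gt (hw u))
      · intro v hv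
        have hsum0 : ∑ v ∈ B i \ C i, w v * (1 - paysum y v (C i \ B i)) = 0 := by
          have hexp : ∑ v ∈ B i \ C i, w v * (1 - paysum y v (C i \ B i))
              = wsum w (B i \ C i) - ∑ v ∈ B i \ C i, w v * paysum y v (C i \ B i) := by
            rw [wsum, ← Finset.sum_sub_distrib]
            exact Finset.sum_congr rfl fun v _ => by ring
          rw [hexp, hEqP]
          exact sub_self _
        have hnn : ∀ z ∈ B i \ C i, 0 ≤ w z * (1 - paysum y z (C i \ B i)) := fun z _ =>
          mul_nonneg (hw z).le (by linarith [paysum_le_one hy z (C i \ B i)])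
        have hterm := (Finset.sum_eq_zero_iff_of_nonneg hnn).1 hsum0 v hv
        rcases mul_eq_zero.1 hterm with h0 | h0
        · exact absurd h0 (ne_of_gt (hw v))
        · linarith
  have key2 : ∀ i : Fin k, γ i ≤ θ →
      (∀ u ∈ C i \ B i, exRatio G w y u = γ i) ∧
        (∀ v ∈ B i \ C i, paysum y v (C i \ B i) = 1) :=
    fun i h => key2N k i (by omega) h
  -- transfer and final counting contradiction
  have htrans : ∀ u : V, exRatio G w x u ≤ θ → exRatio G w y u = exRatio G w x u := by
    intro u hu
    obtain ⟨i, hui⟩ := hcov u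
    by_cases huB : u ∈ B i
    · have hβ := hβxB i u huB
      rw [hβ] at hu ⊢
      exact (key1 i hu).1 u huB
    · have huC := (mem_union.mp hui).resolve_left huB
      have hβ := hβxC i u huC huB
      rw [hβ] at hu ⊢
      exact (key2 i hu).1 u (mem_sdiff.2 ⟨huC, huB⟩)
  have hXsub : (univ.filter fun u : V => exRatio G w x u ≤ θ)
      ⊆ univ.filter fun u : V => exRatio G w y u ≤ θ := by
    intro u hu
    have h2 := (mem_filter.1 hu).2
    exact mem_filter.2 ⟨mem_univ _, by rw [htrans u h2]; exact h2⟩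
  have hYcard : (univ.filter fun u : V => exRatio G w y u ≤ θ).card ≤ (m : ℕ) := by
    rw [← card_filter_equiv e' (fun u => exRatio G w y u ≤ θ)]
    have hss : (univ.filter fun j : Fin (Fintype.card V) => t j ≤ θ) ⊆ Finset.Iio m := by
      intro j hj
      have h2 := (mem_filter.1 hj).2
      rw [Finset.mem_Iio]
      by_contra hmj
      push_neg at hmj
      have h3 := hmy hmj
      linarith
    calc (univ.filter fun j : Fin (Fintype.card V) => t j ≤ θ).card
        ≤ (Finset.Iio m).card := Finset.card_le_card hss
      _ = (m : ℕ) := Fin.card_Iio m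
  have hXcard : (m : ℕ) + 1 ≤ (univ.filter fun u : V => exRatio G w x u ≤ θ).card := by
    rw [← card_filter_equiv e (fun u => exRatio G w x u ≤ θ)]
    have hss : Finset.Iic m ⊆ univ.filter fun j : Fin (Fintype.card V) => s j ≤ θ := by
      intro j hj
      rw [Finset.mem_Iic] at hj
      exact mem_filter.2 ⟨mem_univ _, hmx hj⟩
    calc (m : ℕ) + 1 = (Finset.Iic m).card := (Fin.card_Iic m).symm
      _ ≤ _ := Finset.card_le_card hss
  have hfin := Finset.card_le_card hXsub
  omega


end BDMain
/-- every BD-mechanism allocation is lexicographically optimal. -/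
theorem bd_mechanism_lex_optimal {V : Type*} [Fintype V] [DecidableEq V]
    (G : SimpleGraph V) [DecidableRel G.Adj] (w : V → ℝ)
    (hw : ∀ v, 0 < w v) (hconn : G.Connected) (hcard : 2 ≤ Fintype.card V)
    (k : ℕ) (B C : Fin k → Finset V) (Vs : Fin (k + 1) → Finset V)
    (hV0 : Vs 0 = univ)
    (hVsucc : ∀ i : Fin k, Vs i.succ = Vs i.castSucc \ (B i ∪ C i))
    (hVlast : Vs (Fin.last k) = ∅)
    (hB : ∀ i : Fin k, IsMaxBottleneckIn G w (Vs i.castSucc) (B i))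
    (hC : ∀ i : Fin k, C i = nbhdIn G (Vs i.castSucc) (B i))
    (x : V → V → ℝ) (hx : IsBDAllocation G w k B C x) :
    LexOptimal G w x := by
  exact bd_mechanism_lex_optimal' G w hw hconn hcard k B C Vs hV0 hVsucc hVlast hB hC x hx
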